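/- Let (ΛV, d) be the free DGA on generators a1, a2 of degree 1, b of degree 2, c of degree 3, with da_i = db = 0 and dc = b². Consider the DGA Λ(a1,a2,b,c) ⊗ Λ(a3) where a3 has degree 1 and d a3 = a1·a2 + b. Then its cohomology is isomorphic as a graded algebra to the cohomology of (Λ(a1, a2, x), 0) with |a_i| = 1, |x| = 3, i.e., the minimal model of this extension is (Λ(a1, a2, x), 0). -/

import Mathlib

namespace S17aux

def mcoef (i j : Fin 2 × Fin 2 × Fin 2) : ℝ :=
  if (i.1:ℕ)+(j.1:ℕ) ≤ 1 ∧ (i.2.1:ℕ)+(j.2.1:ℕ) ≤ 1 ∧ (i.2.2:ℕ)+(j.2.2:ℕ) ≤ 1 then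
    (-1:ℝ)^((j.1:ℕ)*((i.2.1:ℕ)+(i.2.2:ℕ)) + (j.2.1:ℕ)*(i.2.2:ℕ)) else 0

def midx (i j : Fin 2 × Fin 2 × Fin 2) : Fin 2 × Fin 2 × Fin 2 :=
  (i.1+j.1, i.2.1+j.2.1, i.2.2+j.2.2)

lemma mono_mul {M : Type*} [Ring M] [Algebra ℝ M] (p q r : M)
    (hp : p*p = 0) (hq : q*q = 0) (hr : r*r = 0)
    (hqp : q*p = -(p*q)) (hrp : r*p = -(p*r)) (hrq : r*q = -(q*r))
    (i j : Fin 2 × Fin 2 × Fin 2) :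
    (p^(i.1:ℕ) * q^(i.2.1:ℕ) * r^(i.2.2:ℕ)) * (p^(j.1:ℕ) * q^(j.2.1:ℕ) * r^(j.2.2:ℕ))
      = mcoef i j • (p^((midx i j).1:ℕ) * q^((midx i j).2.1:ℕ) * r^((midx i j).2.2:ℕ)) := by
  have hp' : ∀ t : M, p*(p*t) = 0 := fun t => by rw [← mul_assoc, hp, zero_mul]
  have hq' : ∀ t : M, q*(q*t) = 0 := fun t => by rw [← mul_assoc, hq, zero_mul]
  have hr' : ∀ t : M, r*(r*t) = 0 := fun t => by rw [← mul_assoc, hr, zero_mul]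
  have hqp' : ∀ t : M, q*(p*t) = -(p*(q*t)) := fun t => by
    rw [← mul_assoc, hqp, neg_mul, mul_assoc]
  have hrp' : ∀ t : M, r*(p*t) = -(p*(r*t)) := fun t => by
    rw [← mul_assoc, hrp, neg_mul, mul_assoc]
  have hrq' : ∀ t : M, r*(q*t) = -(q*(r*t)) := fun t => by
    rw [← mul_assoc, hrq, neg_mul, mul_assoc]
  obtain ⟨i1, i2, i3⟩ := i
  obtain ⟨j1, j2, j3⟩ := j
  fin_cases i1 <;> fin_cases i2 <;> fin_cases i3 <;> fin_cases j1 <;> fin_cases j2 <;>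
    fin_cases j3 <;>
  · simp only [mcoef, midx]
    norm_num [mul_assoc, hp, hq, hr, hqp, hrp, hrq, hp', hq', hr', hqp', hrp', hrq',
      mul_neg, neg_mul]

lemma half {M : Type*} [AddCommGroup M] [Module ℝ M] (u : M) (h : u = -u) : u = 0 := by
  have h2 : (2:ℝ) • u = 0 := by
    rw [two_smul]
    nth_rewrite 2 [h]
    exact add_neg_cancel u
  rcases smul_eq_zero.mp h2 with h' | h'
  · norm_num at h'
  · exact h'

end S17aux

set_option maxHeartbeats 4000000 in
open S17aux in
/-- Let `(A, d)` be the DGA `Λ(a₁, a₂, b, c) ⊗ Λ(a₃)` with `|a₁| = |a₂| =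
`|a₃| = 1`, `|b| = 2`, `|c| = 3`, `da₁ = da₂ = db = 0`, `dc = b²`, `da₃ = a₁a₂ + b`
(freeness being encoded by the monomial basis `a₁^{ε₁} a₂^{ε₂} a₃^{ε₃} b^k c^{ε₄}`), and let
`(B, 0)` be the minimal DGA `Λ(α₁, α₂, χ)` with `|α₁| = |α₂| = 1`, `|χ| = 3` and zero
differential (with monomial basis `α₁^{ε₁} α₂^{ε₂} χ^{ε₃}`).  Then there is a morphism of
graded algebras `φ : B → A` landing in closed elements and inducing an isomorphism on
cohomology; i.e. the cohomology of `A` is isomorphic as a graded algebra to that of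
`(Λ(a₁, a₂, x), 0)`, which is therefore the minimal model of the extension. -/
theorem statement17 {A : Type*} [Ring A] [Algebra ℝ A] (𝒜 : ℕ → Submodule ℝ A)
    [GradedAlgebra 𝒜] (d : A →ₗ[ℝ] A)
    (hd2 : ∀ v, d (d v) = 0)
    (hdeg : ∀ i, ∀ v ∈ 𝒜 i, d v ∈ 𝒜 (i + 1))
    (hLeib : ∀ i, ∀ u ∈ 𝒜 i, ∀ v : A, d (u * v) = d u * v + ((-1 : ℝ) ^ i) • (u * d v))
    (hcommA : ∀ i j, ∀ u ∈ 𝒜 i, ∀ v ∈ 𝒜 j, u * v = ((-1 : ℝ) ^ (i * j)) • (v * u))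
    (a1 a2 a3 b c : A)
    (ha1 : a1 ∈ 𝒜 1) (ha2 : a2 ∈ 𝒜 1) (ha3 : a3 ∈ 𝒜 1) (hb : b ∈ 𝒜 2) (hc : c ∈ 𝒜 3)
    (hda1 : d a1 = 0) (hda2 : d a2 = 0) (hdb : d b = 0)
    (hdc : d c = b * b) (hda3 : d a3 = a1 * a2 + b)
    -- monomial basis of `Λ(a₁, a₂, b, c) ⊗ Λ(a₃)`:
    (basA : Module.Basis (Fin 2 × Fin 2 × Fin 2 × ℕ × Fin 2) ℝ A)
    (hbasA : ∀ q : Fin 2 × Fin 2 × Fin 2 × ℕ × Fin 2,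
      basA q = a1 ^ (q.1 : ℕ) * a2 ^ (q.2.1 : ℕ) * a3 ^ (q.2.2.1 : ℕ) *
        b ^ q.2.2.2.1 * c ^ (q.2.2.2.2 : ℕ))
    {B : Type*} [Ring B] [Algebra ℝ B] (ℬ : ℕ → Submodule ℝ B) [GradedAlgebra ℬ]
    (hcommB : ∀ i j, ∀ u ∈ ℬ i, ∀ v ∈ ℬ j, u * v = ((-1 : ℝ) ^ (i * j)) • (v * u))
    (α1 α2 χ : B) (hα1 : α1 ∈ ℬ 1) (hα2 : α2 ∈ ℬ 1) (hχ : χ ∈ ℬ 3)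
    -- monomial basis of `Λ(α₁, α₂, χ)`:
    (basB : Module.Basis (Fin 2 × Fin 2 × Fin 2) ℝ B)
    (hbasB : ∀ q : Fin 2 × Fin 2 × Fin 2,
      basB q = α1 ^ (q.1 : ℕ) * α2 ^ (q.2.1 : ℕ) * χ ^ (q.2.2 : ℕ)) :
    ∃ φ : B →ₐ[ℝ] A,
      -- `φ` preserves degrees,
      (∀ k, ∀ w ∈ ℬ k, φ w ∈ 𝒜 k) ∧
      -- `φ` is a morphism of DGAs (`B` has zero differential),
      (∀ w : B, d (φ w) = 0) ∧
      -- `φ` is injective on cohomology,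
      (∀ w : B, (∃ u : A, φ w = d u) → w = 0) ∧
      -- and surjective on cohomology:
      (∀ k, ∀ z ∈ 𝒜 k, d z = 0 → ∃ w ∈ ℬ k, ∃ u : A, z = φ w + d u) := by
  classical
  have memcast : ∀ {i j : ℕ} {u : A}, u ∈ 𝒜 i → i = j → u ∈ 𝒜 j := by
    rintro i j u hu rfl; exact hu
  have memcastB : ∀ {i j : ℕ} {u : B}, u ∈ ℬ i → i = j → u ∈ ℬ j := by
    rintro i j u hu rfl; exact hu
  -- squares of odd elements vanish
  have oddsqA : ∀ (i : ℕ) (u : A), u ∈ 𝒜 i → Odd i → u * u = 0 := by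
    intro i u hu hi
    refine half _ ?_
    have := hcommA i i u hu u hu
    rwa [Odd.neg_one_pow (hi.mul hi), neg_one_smul] at this
  have acommA : ∀ (i j : ℕ) (u v : A), u ∈ 𝒜 i → v ∈ 𝒜 j → Odd (i*j) →
      v * u = -(u * v) := by
    intro i j u v hu hv hodd
    have := hcommA i j u hu v hv
    rw [Odd.neg_one_pow hodd, neg_one_smul] at this
    rw [this, neg_neg]
  -- relations among the generators of A
  have sq1 : a1 * a1 = 0 := oddsqA 1 a1 ha1 odd_one
  have sq2 : a2 * a2 = 0 := oddsqA 1 a2 ha2 odd_one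
  have sq3 : a3 * a3 = 0 := oddsqA 1 a3 ha3 odd_one
  have c21 : a2 * a1 = -(a1 * a2) := acommA 1 1 a1 a2 ha1 ha2 odd_one
  have c31 : a3 * a1 = -(a1 * a3) := acommA 1 1 a1 a3 ha1 ha3 odd_one
  have c32 : a3 * a2 = -(a2 * a3) := acommA 1 1 a2 a3 ha2 ha3 odd_one
  have sq1' : ∀ t : A, a1 * (a1 * t) = 0 := fun t => by rw [← mul_assoc, sq1, zero_mul]
  have sq2' : ∀ t : A, a2 * (a2 * t) = 0 := fun t => by rw [← mul_assoc, sq2, zero_mul]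
  have sq3' : ∀ t : A, a3 * (a3 * t) = 0 := fun t => by rw [← mul_assoc, sq3, zero_mul]
  have c21' : ∀ t : A, a2 * (a1 * t) = -(a1 * (a2 * t)) := fun t => by
    rw [← mul_assoc, c21, neg_mul, mul_assoc]
  have c31' : ∀ t : A, a3 * (a1 * t) = -(a1 * (a3 * t)) := fun t => by
    rw [← mul_assoc, c31, neg_mul, mul_assoc]
  have c32' : ∀ t : A, a3 * (a2 * t) = -(a2 * (a3 * t)) := fun t => by
    rw [← mul_assoc, c32, neg_mul, mul_assoc]
  -- basic d computations
  have h1mem : (1:A) ∈ 𝒜 0 := SetLike.one_mem_graded 𝒜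
  have hd1 : d (1:A) = 0 := by
    have := hLeib 0 1 h1mem 1
    simp only [mul_one, one_mul, pow_zero, one_smul] at this
    have h2 : d (1:A) = d 1 + d 1 := this
    exact (left_eq_add.mp h2)
  have hbk : ∀ k : ℕ, b ^ k ∈ 𝒜 (2*k) := by
    intro k
    exact memcast (SetLike.pow_mem_graded k hb) (by simp [smul_eq_mul]; ring)
  have hdbk : ∀ k : ℕ, d (b ^ k) = 0 := by
    intro k
    induction k with
    | zero => simpa using hd1
    | succ n ih =>
      have := hLeib 2 b hb (b ^ n)
      rw [hdb, ih, zero_mul, mul_zero, smul_zero, add_zero, ← pow_succ'] at this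
      exact this
  -- d of the right factors a3^e3 * (b^k * c^e4)
  have hRa3bk : ∀ k : ℕ, d (a3 * b ^ k) = a1 * (a2 * b ^ k) + b ^ (k+1) := by
    intro k
    have := hLeib 1 a3 ha3 (b ^ k)
    rw [hda3, hdbk, mul_zero, smul_zero, add_zero, add_mul, mul_assoc, ← pow_succ'] at this
    exact this
  have hRbkc : ∀ k : ℕ, d (b ^ k * c) = b ^ (k+2) := by
    intro k
    have := hLeib (2*k) (b ^ k) (hbk k) c
    rw [hdbk, hdc, zero_mul, zero_add, Even.neg_one_pow ⟨k, by ring⟩, one_smul] at this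
    rw [this, ← mul_assoc, ← pow_succ, ← pow_succ]
  have hRa3bkc : ∀ k : ℕ, d (a3 * (b ^ k * c)) =
      a1 * (a2 * (b ^ k * c)) + b ^ (k+1) * c - a3 * b ^ (k+2) := by
    intro k
    have := hLeib 1 a3 ha3 (b ^ k * c)
    rw [hda3, hRbkc, add_mul, mul_assoc, ← mul_assoc b, ← pow_succ'] at this
    rw [this]
    rw [pow_one, neg_one_smul]
    abel
  have hdmulm1 : ∀ (u : A), u ∈ 𝒜 1 → d u = 0 → ∀ v, d (u * v) = -(u * d v) := by
    intro u hu hdu v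
    rw [hLeib 1 u hu v, hdu, zero_mul, zero_add, pow_one, neg_one_smul]
  have hD1 : ∀ (e1 e2 : Fin 2) (k : ℕ), d (basA (e1,e2,0,k,0)) = 0 := by
    intro e1 e2 k
    fin_cases e1 <;> fin_cases e2 <;>
      simp only [hbasA, Fin.isValue, Fin.val_zero, Fin.val_one, pow_zero, pow_one, one_mul, mul_one, mul_assoc]
    · exact hdbk k
    · rw [hdmulm1 a2 ha2 hda2, hdbk]; simp
    · rw [hdmulm1 a1 ha1 hda1, hdbk]; simp
    · rw [hdmulm1 a1 ha1 hda1, hdmulm1 a2 ha2 hda2, hdbk]; simp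
  have hD2 : ∀ (e1 e2 : Fin 2) (k : ℕ), d (basA (e1,e2,1,k,0)) =
      ((-1:ℝ)^((e1:ℕ)+(e2:ℕ))) •
        ((if e1 = 0 ∧ e2 = 0 then basA (1,1,0,k,0) else 0) + basA (e1,e2,0,k+1,0)) := by
    intro e1 e2 k
    fin_cases e1 <;> fin_cases e2 <;>
      simp only [hbasA, Fin.isValue, Fin.val_zero, Fin.val_one, pow_zero, pow_one, one_mul, mul_one, mul_assoc] <;>
      norm_num
    · rw [hRa3bk k]
    · rw [hdmulm1 a2 ha2 hda2, hRa3bk k]; simp [mul_add, c21', sq2']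
    · rw [hdmulm1 a1 ha1 hda1, hRa3bk k]; simp [mul_add, sq1']
    · rw [hdmulm1 a1 ha1 hda1, hdmulm1 a2 ha2 hda2, hRa3bk k]
      simp [mul_add, c21', sq1', sq2']
  have hD3 : ∀ (e1 e2 : Fin 2) (k : ℕ), d (basA (e1,e2,0,k,1)) =
      ((-1:ℝ)^((e1:ℕ)+(e2:ℕ))) • basA (e1,e2,0,k+2,0) := by
    intro e1 e2 k
    fin_cases e1 <;> fin_cases e2 <;>
      simp only [hbasA, Fin.isValue, Fin.val_zero, Fin.val_one, pow_zero, pow_one, one_mul, mul_one, mul_assoc] <;>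
      norm_num
    · rw [hRbkc k]
    · rw [hdmulm1 a2 ha2 hda2, hRbkc k]
    · rw [hdmulm1 a1 ha1 hda1, hRbkc k]
    · rw [hdmulm1 a1 ha1 hda1, hdmulm1 a2 ha2 hda2, hRbkc k]; simp
  have hD4 : ∀ (e1 e2 : Fin 2) (k : ℕ), d (basA (e1,e2,1,k,1)) =
      ((-1:ℝ)^((e1:ℕ)+(e2:ℕ))) •
        ((if e1 = 0 ∧ e2 = 0 then basA (1,1,0,k,1) else 0) + basA (e1,e2,0,k+1,1)
          - basA (e1,e2,1,k+2,0)) := by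
    intro e1 e2 k
    fin_cases e1 <;> fin_cases e2 <;>
      simp only [hbasA, Fin.isValue, Fin.val_zero, Fin.val_one, pow_zero, pow_one, one_mul, mul_one, mul_assoc] <;>
      norm_num
    · rw [hRa3bkc k]
    · rw [hdmulm1 a2 ha2 hda2, hRa3bkc k]
      simp [mul_add, mul_sub, c21', sq2']
    · rw [hdmulm1 a1 ha1 hda1, hRa3bkc k]
      simp [mul_add, mul_sub, sq1']
    · rw [hdmulm1 a1 ha1 hda1, hdmulm1 a2 ha2 hda2, hRa3bkc k]
      simp [mul_add, mul_sub, c21', sq1', sq2']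
  -- the closed degree-3 element x
  set x : A := c + a1*(a2*a3) - a3*b with hxdef
  have hxmem : x ∈ 𝒜 3 := by
    rw [hxdef]
    refine Submodule.sub_mem _ (Submodule.add_mem _ hc ?_) ?_
    · exact memcast (SetLike.mul_mem_graded ha1 (SetLike.mul_mem_graded ha2 ha3))
        (by norm_num)
    · exact memcast (SetLike.mul_mem_graded ha3 hb) (by norm_num)
  have hdx : d x = 0 := by
    rw [hxdef]
    simp only [map_sub, map_add]
    rw [hdc, hdmulm1 a1 ha1 hda1, hdmulm1 a2 ha2 hda2, hda3,
      hLeib 1 a3 ha3 b, hda3, hdb]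
    simp [mul_add, c21', sq2, add_mul, mul_assoc]
    abel
  have sqx : x * x = 0 := oddsqA 3 x hxmem (by decide)
  have cx1 : x * a1 = -(a1 * x) := acommA 1 3 a1 x ha1 hxmem (by decide)
  have cx2 : x * a2 = -(a2 * x) := acommA 1 3 a2 x ha2 hxmem (by decide)
  -- relations in B
  have oddsqB : ∀ (i : ℕ) (u : B), u ∈ ℬ i → Odd i → u * u = 0 := by
    intro i u hu hi
    refine half _ ?_
    have := hcommB i i u hu u hu
    rwa [Odd.neg_one_pow (hi.mul hi), neg_one_smul] at this
  have acommB : ∀ (i j : ℕ) (u v : B), u ∈ ℬ i → v ∈ ℬ j → Odd (i*j) →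
      v * u = -(u * v) := by
    intro i j u v hu hv hodd
    have := hcommB i j u hu v hv
    rw [Odd.neg_one_pow hodd, neg_one_smul] at this
    rw [this, neg_neg]
  have sqα1 : α1 * α1 = 0 := oddsqB 1 α1 hα1 odd_one
  have sqα2 : α2 * α2 = 0 := oddsqB 1 α2 hα2 odd_one
  have sqχ : χ * χ = 0 := oddsqB 3 χ hχ (by decide)
  have cα21 : α2 * α1 = -(α1 * α2) := acommB 1 1 α1 α2 hα1 hα2 odd_one
  have cχ1 : χ * α1 = -(α1 * χ) := acommB 1 3 α1 χ hα1 hχ (by decide)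
  have cχ2 : χ * α2 = -(α2 * χ) := acommB 1 3 α2 χ hα2 hχ (by decide)
  -- the morphism φ on the level of linear maps
  set mA : Fin 2 × Fin 2 × Fin 2 → A :=
    fun e => a1^(e.1:ℕ) * a2^(e.2.1:ℕ) * x^(e.2.2:ℕ) with hmAdef
  set φℓ : B →ₗ[ℝ] A := basB.constr ℝ mA with hφdef
  have hφbas : ∀ e, φℓ (basB e) = mA e := by
    intro e; rw [hφdef]; exact basB.constr_basis ℝ mA e
  have hBmul : ∀ i j, basB i * basB j = mcoef i j • basB (midx i j) := by
    intro i j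
    rw [hbasB, hbasB, hbasB]
    exact mono_mul α1 α2 χ sqα1 sqα2 sqχ cα21 cχ1 cχ2 i j
  have hAmul : ∀ i j, mA i * mA j = mcoef i j • mA (midx i j) := by
    intro i j
    rw [hmAdef]
    exact mono_mul a1 a2 x sq1 sq2 sqx c21 cx1 cx2 i j
  have hκ : ∀ i j, φℓ (basB i * basB j) = φℓ (basB i) * φℓ (basB j) := by
    intro i j
    rw [hBmul, map_smul, hφbas, hφbas, hφbas, hAmul]
  have φmul : ∀ u v : B, φℓ (u * v) = φℓ u * φℓ v := by
    have hbil : (LinearMap.mul ℝ B).compr₂ φℓ = (LinearMap.mul ℝ A).compl₁₂ φℓ φℓ :=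
      basB.ext fun i => basB.ext fun j => by
        simpa only [LinearMap.compr₂_apply, LinearMap.mul_apply',
          LinearMap.compl₁₂_apply] using hκ i j
    intro u v
    have := DFunLike.congr_fun (DFunLike.congr_fun hbil u) v
    simpa only [LinearMap.compr₂_apply, LinearMap.mul_apply',
      LinearMap.compl₁₂_apply] using this
  have φone : φℓ 1 = 1 := by
    have h1 : (1:B) = basB (0,0,0) := by rw [hbasB]; simp
    rw [h1, hφbas, hmAdef]
    simp
  -- the projection π : A → B
  set pv : (Fin 2 × Fin 2 × Fin 2 × ℕ × Fin 2) → B := fun q =>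
    if q.2.2.1 = 0 ∧ q.2.2.2.1 = 0 then basB (q.1, q.2.1, q.2.2.2.2)
    else if q.2.2.1 = 0 ∧ q.2.2.2.1 = 1 ∧ q.1 = 0 ∧ q.2.1 = 0 then
      -(basB (1, 1, q.2.2.2.2))
    else 0 with hpvdef
  set π : A →ₗ[ℝ] B := basA.constr ℝ pv with hπdef
  have hπbas : ∀ q, π (basA q) = pv q := by
    intro q; rw [hπdef]; exact basA.constr_basis ℝ pv q
  -- the homotopy operator
  set hv : (Fin 2 × Fin 2 × Fin 2 × ℕ × Fin 2) → A := fun q =>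
    if q.2.2.1 = 1 then 0 else
    match q.2.2.2.1 with
    | 0 => 0
    | (k+1) => ((-1:ℝ)^((q.1:ℕ)+(q.2.1:ℕ))) • basA (q.1, q.2.1, 1, k, q.2.2.2.2)
        - (if q.1 = 0 ∧ q.2.1 = 0 then
            (match k with | 0 => 0 | (k'+1) => basA (1,1,1,k',q.2.2.2.2)) else 0)
    with hhvdef
  set hmap : A →ₗ[ℝ] A := basA.constr ℝ hv with hhdef
  have hhbas : ∀ q, hmap (basA q) = hv q := by
    intro q; rw [hhdef]; exact basA.constr_basis ℝ hv q
  -- clean evaluation lemmas for π and h on the basis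
  have hπ1 : ∀ (e1 e2 e4 : Fin 2), π (basA (e1,e2,0,0,e4)) = basB (e1,e2,e4) := by
    intro e1 e2 e4; rw [hπbas]; simp [hpvdef]
  have hπ2 : ∀ (e1 e2 e4 : Fin 2), π (basA (e1,e2,0,1,e4)) =
      (if e1 = 0 ∧ e2 = 0 then -(basB (1,1,e4)) else 0) := by
    intro e1 e2 e4; rw [hπbas]; simp [hpvdef]
  have hπ3 : ∀ (e1 e2 e4 : Fin 2) (k : ℕ), π (basA (e1,e2,0,k+2,e4)) = 0 := by
    intro e1 e2 e4 k; rw [hπbas]; simp [hpvdef]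
  have hπ4 : ∀ (e1 e2 e4 : Fin 2) (k : ℕ), π (basA (e1,e2,1,k,e4)) = 0 := by
    intro e1 e2 e4 k; rw [hπbas]; simp [hpvdef]
  have hH1 : ∀ (e1 e2 e4 : Fin 2), hmap (basA (e1,e2,0,0,e4)) = 0 := by
    intro e1 e2 e4; rw [hhbas]; simp [hhvdef]
  have hH2 : ∀ (e1 e2 e4 : Fin 2), hmap (basA (e1,e2,0,1,e4)) =
      ((-1:ℝ)^((e1:ℕ)+(e2:ℕ))) • basA (e1,e2,1,0,e4) := by
    intro e1 e2 e4; rw [hhbas]; simp [hhvdef]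
  have hH3 : ∀ (e1 e2 e4 : Fin 2) (k : ℕ), hmap (basA (e1,e2,0,k+2,e4)) =
      ((-1:ℝ)^((e1:ℕ)+(e2:ℕ))) • basA (e1,e2,1,k+1,e4)
        - (if e1 = 0 ∧ e2 = 0 then basA (1,1,1,k,e4) else 0) := by
    intro e1 e2 e4 k; rw [hhbas]; simp [hhvdef]
  have hH4 : ∀ (e1 e2 e4 : Fin 2) (k : ℕ), hmap (basA (e1,e2,1,k,e4)) = 0 := by
    intro e1 e2 e4 k; rw [hhbas]; simp [hhvdef]
  -- expansion of the monomials mA in the basis of A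
  have hMono : ∀ e1 e2 e4 : Fin 2, mA (e1,e2,e4) = basA (e1,e2,0,0,e4)
      + (if e1 = 0 ∧ e2 = 0 ∧ e4 = 1 then basA (1,1,1,0,0) else 0)
      - (if e4 = 1 then basA (e1,e2,1,1,0) else 0) := by
    intro e1 e2 e4
    fin_cases e1 <;> fin_cases e2 <;> fin_cases e4 <;>
      simp only [hmAdef, hbasA, hxdef, Fin.isValue, Fin.val_zero, Fin.val_one, pow_zero,
        pow_one, one_mul, mul_one, mul_assoc] <;>
      norm_num [mul_add, mul_sub, c21', sq1', sq2', mul_assoc] <;>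
      abel
  have hπφ : ∀ e, π (φℓ (basB e)) = basB e := by
    intro e
    obtain ⟨e1,e2,e4⟩ := e
    rw [hφbas, hMono e1 e2 e4]
    fin_cases e1 <;> fin_cases e2 <;> fin_cases e4 <;>
      simp [hπbas, hpvdef]
  have hπid : ∀ w, π (φℓ w) = w := by
    have hext : π ∘ₗ φℓ = LinearMap.id := basB.ext fun e => by simpa using hπφ e
    intro w
    simpa using DFunLike.congr_fun hext w
  -- φ lands in closed elements
  have hdmA : ∀ e, d (mA e) = 0 := by
    intro e
    obtain ⟨e1,e2,e4⟩ := e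
    fin_cases e1 <;> fin_cases e2 <;> fin_cases e4 <;>
      simp only [hmAdef, Fin.isValue, Fin.val_zero, Fin.val_one, pow_zero, pow_one,
        one_mul, mul_one, mul_assoc]
    · exact hd1
    · exact hdx
    · exact hda2
    · rw [hdmulm1 a2 ha2 hda2, hdx]; simp
    · exact hda1
    · rw [hdmulm1 a1 ha1 hda1, hdx]; simp
    · rw [hdmulm1 a1 ha1 hda1, hda2]; simp
    · rw [hdmulm1 a1 ha1 hda1, hdmulm1 a2 ha2 hda2, hdx]; simp
  have hdφ0 : ∀ w, d (φℓ w) = 0 := by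
    have hext : d ∘ₗ φℓ = 0 := basB.ext fun e => by simp [hφbas, hdmA]
    intro w
    simpa using DFunLike.congr_fun hext w
  -- membership lemmas
  have hp1A : ∀ (u : A), u ∈ 𝒜 1 → ∀ e : Fin 2, u^(e:ℕ) ∈ 𝒜 (e:ℕ) := by
    intro u hu e
    fin_cases e
    · simpa using h1mem
    · simpa using hu
  have hp3A : ∀ (u : A), u ∈ 𝒜 3 → ∀ e : Fin 2, u^(e:ℕ) ∈ 𝒜 (3*(e:ℕ)) := by
    intro u hu e
    fin_cases e
    · simpa using h1mem
    · simpa using hu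
  have h1memB : (1:B) ∈ ℬ 0 := SetLike.one_mem_graded ℬ
  have hp1B : ∀ (u : B), u ∈ ℬ 1 → ∀ e : Fin 2, u^(e:ℕ) ∈ ℬ (e:ℕ) := by
    intro u hu e
    fin_cases e
    · simpa using h1memB
    · simpa using hu
  have hp3B : ∀ (u : B), u ∈ ℬ 3 → ∀ e : Fin 2, u^(e:ℕ) ∈ ℬ (3*(e:ℕ)) := by
    intro u hu e
    fin_cases e
    · simpa using h1memB
    · simpa using hu
  have hbasAmem : ∀ (e1 e2 e3 : Fin 2) (k : ℕ) (e4 : Fin 2),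
      basA (e1,e2,e3,k,e4) ∈ 𝒜 ((e1:ℕ)+(e2:ℕ)+(e3:ℕ)+2*k+3*(e4:ℕ)) := by
    intro e1 e2 e3 k e4
    rw [hbasA]
    exact SetLike.mul_mem_graded (SetLike.mul_mem_graded (SetLike.mul_mem_graded
      (SetLike.mul_mem_graded (hp1A a1 ha1 e1) (hp1A a2 ha2 e2)) (hp1A a3 ha3 e3))
      (hbk k)) (hp3A c hc e4)
  have hbasBmem : ∀ (e1 e2 e4 : Fin 2),
      basB (e1,e2,e4) ∈ ℬ ((e1:ℕ)+(e2:ℕ)+3*(e4:ℕ)) := by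
    intro e1 e2 e4
    rw [hbasB]
    exact SetLike.mul_mem_graded (SetLike.mul_mem_graded (hp1B α1 hα1 e1)
      (hp1B α2 hα2 e2)) (hp3B χ hχ e4)
  have hmAmem : ∀ (e1 e2 e4 : Fin 2),
      mA (e1,e2,e4) ∈ 𝒜 ((e1:ℕ)+(e2:ℕ)+3*(e4:ℕ)) := by
    intro e1 e2 e4
    rw [hmAdef]
    exact SetLike.mul_mem_graded (SetLike.mul_mem_graded (hp1A a1 ha1 e1)
      (hp1A a2 ha2 e2)) (hp3A x hxmem e4)
  have hpvmem : ∀ (e1 e2 e3 : Fin 2) (k : ℕ) (e4 : Fin 2),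
      pv (e1,e2,e3,k,e4) ∈ ℬ ((e1:ℕ)+(e2:ℕ)+(e3:ℕ)+2*k+3*(e4:ℕ)) := by
    intro e1 e2 e3 k e4
    rw [hpvdef]
    dsimp only
    split_ifs with h1 h2
    · obtain ⟨rfl, rfl⟩ := h1
      exact memcastB (hbasBmem e1 e2 e4) (by simp)
    · obtain ⟨rfl, rfl, rfl, rfl⟩ := h2
      exact memcastB (Submodule.neg_mem _ (hbasBmem 1 1 e4)) (by simp)
    · exact Submodule.zero_mem _
  -- make all constructed objects opaque from now on
  clear_value x mA φℓ pv π hv hmap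
  -- the homotopy identity  d∘h + h∘d = id - φ∘π  (checked on the basis)
  have hkey : ∀ q, d (hmap (basA q)) + hmap (d (basA q)) + φℓ (π (basA q)) = basA q := by
    rintro ⟨e1, e2, e3, k, e4⟩
    rcases k with _ | _ | k <;>
      fin_cases e3 <;> fin_cases e4 <;> fin_cases e1 <;> fin_cases e2 <;>
    · norm_num [-Prod.mk_zero_zero, -Prod.mk_one_one, hD1, hD2, hD3, hD4, hπ1, hπ2,
        hπ3, hπ4, hH1, hH2, hH3, hH4, hφbas, hMono, map_add, map_sub, map_smul,
        map_neg, smul_add, smul_sub, neg_neg]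
      try abel
  -- global homotopy identity
  have hhom : ∀ a : A, d (hmap a) + hmap (d a) + φℓ (π a) = a := by
    have hext : d ∘ₗ hmap + hmap ∘ₗ d + φℓ ∘ₗ π = LinearMap.id :=
      basA.ext fun q => by simpa using hkey q
    intro a
    simpa using DFunLike.congr_fun hext a
  -- π annihilates exact elements
  have hπd : ∀ a : A, π (d a) = 0 := by
    have hext : π ∘ₗ d = 0 := basA.ext fun q => by
      obtain ⟨e1,e2,e3,k,e4⟩ := q
      rcases k with _ | _ | k <;> fin_cases e3 <;> fin_cases e4 <;>
        fin_cases e1 <;> fin_cases e2 <;>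
      · norm_num [-Prod.mk_zero_zero, -Prod.mk_one_one, hD1, hD2, hD3, hD4, hπ1, hπ2,
          hπ3, hπ4, map_add, map_sub, map_smul, map_neg, smul_add, smul_sub]
    intro a
    simpa using DFunLike.congr_fun hext a
  -- projections onto graded components
  have hprojA : ∀ (i j : ℕ) (u : A), u ∈ 𝒜 i →
      GradedAlgebra.proj 𝒜 j u = if i = j then u else 0 := by
    intro i j u hu
    split_ifs with h
    · subst h; rw [GradedAlgebra.proj_apply, DirectSum.decompose_of_mem_same 𝒜 hu]
    · rw [GradedAlgebra.proj_apply, DirectSum.decompose_of_mem_ne 𝒜 hu h]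
  have hprojB : ∀ (i j : ℕ) (u : B), u ∈ ℬ i →
      GradedAlgebra.proj ℬ j u = if i = j then u else 0 := by
    intro i j u hu
    split_ifs with h
    · subst h; rw [GradedAlgebra.proj_apply, DirectSum.decompose_of_mem_same ℬ hu]
    · rw [GradedAlgebra.proj_apply, DirectSum.decompose_of_mem_ne ℬ hu h]
  have hprojmemA : ∀ (j : ℕ) (a : A), GradedAlgebra.proj 𝒜 j a ∈ 𝒜 j := by
    intro j a
    rw [GradedAlgebra.proj_apply]
    exact SetLike.coe_mem _
  have hprojmemB : ∀ (j : ℕ) (w : B), GradedAlgebra.proj ℬ j w ∈ ℬ j := by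
    intro j w
    rw [GradedAlgebra.proj_apply]
    exact SetLike.coe_mem _
  -- π preserves degrees
  have hπdeg : ∀ (j : ℕ) (a : A), a ∈ 𝒜 j → π a ∈ ℬ j := by
    have hcompat : ∀ j : ℕ, π ∘ₗ GradedAlgebra.proj 𝒜 j = GradedAlgebra.proj ℬ j ∘ₗ π := by
      intro j
      refine basA.ext fun q => ?_
      obtain ⟨e1,e2,e3,k,e4⟩ := q
      simp only [LinearMap.comp_apply]
      rw [hprojA _ j _ (hbasAmem e1 e2 e3 k e4), hπbas,
        hprojB _ j _ (hpvmem e1 e2 e3 k e4)]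
      split_ifs with h
      · exact hπbas _
      · simp
    intro j a ha
    have h1 : GradedAlgebra.proj 𝒜 j a = a := by
      rw [GradedAlgebra.proj_apply, DirectSum.decompose_of_mem_same 𝒜 ha]
    have h2 := DFunLike.congr_fun (hcompat j) a
    simp only [LinearMap.comp_apply, h1] at h2
    rw [h2]
    exact hprojmemB j (π a)
  -- φ preserves degrees
  have hφdeg : ∀ (j : ℕ) (w : B), w ∈ ℬ j → φℓ w ∈ 𝒜 j := by
    have hcompat : ∀ j : ℕ, φℓ ∘ₗ GradedAlgebra.proj ℬ j = GradedAlgebra.proj 𝒜 j ∘ₗ φℓ := by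
      intro j
      refine basB.ext fun e => ?_
      obtain ⟨e1,e2,e4⟩ := e
      simp only [LinearMap.comp_apply]
      rw [hprojB _ j _ (hbasBmem e1 e2 e4), hφbas, hprojA _ j _ (hmAmem e1 e2 e4)]
      split_ifs with h
      · exact hφbas _
      · simp
    intro j w hw
    have h1 : GradedAlgebra.proj ℬ j w = w := by
      rw [GradedAlgebra.proj_apply, DirectSum.decompose_of_mem_same ℬ hw]
    have h2 := DFunLike.congr_fun (hcompat j) w
    simp only [LinearMap.comp_apply, h1] at h2
    rw [h2]
    exact hprojmemA j (φℓ w)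
  -- assemble the result
  refine ⟨AlgHom.ofLinearMap φℓ φone φmul, ?_, ?_, ?_, ?_⟩
  · intro k w hw
    exact hφdeg k w hw
  · intro w
    exact hdφ0 w
  · rintro w ⟨u, hu⟩
    have h1 : φℓ w = d u := hu
    have := hπid w
    rw [← this, h1, hπd]
  · intro k z hz hdz
    refine ⟨π z, hπdeg k z hz, hmap z, ?_⟩
    have h := hhom z
    rw [hdz, map_zero, add_zero] at h
    have : (AlgHom.ofLinearMap φℓ φone φmul) (π z) = φℓ (π z) := rfl
    rw [this]
    conv_lhs => rw [← h]
    abel
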